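/- arXiv:math-ph/0410022 — 4 statements merged into one kernel-verified Lean document; each statement's English description precedes it below -/
import Mathlib

section
/- Let a : ℤ² × ℤ² → ℝ be an elliptic matrix for the square lattice graph, and let L be the associated elliptic operator on functions u : ℤ² → ℂ, i.e. (Lu)(v) = a(v,v)u(v) + ∑_{w ~ v} a(v,w)u(w). Then for every λ ∈ ℂ there is no nonzero finitely supported function u : ℤ² → ℂ with Lu = λu. (This is the case of the regular (4,4) tessellation, whose combinatorial curvature vanishes at every corner, in the paper's main theorem; it recovers the two-dimensional case of Delyon–Souillard.) -/
/-- The set of the four nearest-neighbour directions in the square lattice. -/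
def sqDirs : Finset (ℤ × ℤ) := {(1, 0), (-1, 0), (0, 1), (0, -1)}

/-- Adjacency in the square lattice graph: `v ~ w` iff `w - v` is a nearest-neighbour
direction. -/
def sqAdj (v w : ℤ × ℤ) : Prop := w - v ∈ sqDirs

/-- The elliptic operator on the square lattice associated to the matrix `a`:
`(L u)(v) = a(v,v) u(v) + ∑_{w ~ v} a(v,w) u(w)`. -/
noncomputable def sqL (a : (ℤ × ℤ) × (ℤ × ℤ) → ℝ) (u : ℤ × ℤ → ℂ) (v : ℤ × ℤ) : ℂ :=
  (a (v, v) : ℂ) * u v + ∑ d ∈ sqDirs, (a (v, v + d) : ℂ) * u (v + d)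

/-- No elliptic operator on the square lattice (the regular (4,4) tessellation) admits a
nonzero finitely supported eigenfunction. -/
theorem square_lattice_no_compactly_supported_eigenfunction
    (a : (ℤ × ℤ) × (ℤ × ℤ) → ℝ)
    (hell₁ : ∀ v w, sqAdj v w → a (v, w) ≠ 0)
    (hell₂ : ∀ v w, v ≠ w → ¬ sqAdj v w → a (v, w) = 0)
    (lam : ℂ) :
    ¬ ∃ u : ℤ × ℤ → ℂ, u ≠ 0 ∧ (Function.support u).Finite ∧
      ∀ v, sqL a u v = lam * u v := by
  rintro ⟨u, hu, hfin, heq⟩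
  obtain ⟨v, hv, hmax⟩ := hfin.toFinset.exists_max_image
      (fun p => toLex (p.1 + p.2, p.1))
      (by rw [Set.Finite.toFinset_nonempty]
          exact Function.support_nonempty_iff.mpr hu)
  simp only [Set.Finite.mem_toFinset, Function.mem_support] at hv hmax
  have h0 : ∀ p : ℤ × ℤ,
      (v.1 + v.2 < p.1 + p.2 ∨ (p.1 + p.2 = v.1 + v.2 ∧ v.1 < p.1)) → u p = 0 := by
    intro p hp
    by_contra h
    have hle := hmax p h
    rw [Prod.Lex.le_iff] at hle
    simp only [ofLex_toLex] at hle
    omega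
  set w : ℤ × ℤ := (v.1 + 1, v.2) with hw
  have huw : u w = 0 := h0 w (by
    have e1 : w.1 = v.1 + 1 := rfl
    have e2 : w.2 = v.2 := rfl
    omega)
  have ew1 : w.1 = v.1 + 1 := rfl
  have ew2 : w.2 = v.2 := rfl
  have h1 : u (w + (1, 0)) = 0 := h0 _ (by
    have e1 : (w + (1, 0)).1 = w.1 + 1 := rfl
    have e2 : (w + (1, 0)).2 = w.2 + 0 := rfl
    omega)
  have h2 : u (w + (0, 1)) = 0 := h0 _ (by
    have e1 : (w + (0, 1)).1 = w.1 + 0 := rfl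
    have e2 : (w + (0, 1)).2 = w.2 + 1 := rfl
    omega)
  have h3 : u (w + (0, -1)) = 0 := h0 _ (by
    have e1 : (w + (0, -1)).1 = w.1 + 0 := rfl
    have e2 : (w + (0, -1)).2 = w.2 + -1 := rfl
    omega)
  have hwv : w + (-1, 0) = v := by
    have : w + (-1, 0) = (v.1 + 1 + -1, v.2 + 0) := rfl
    rw [this]
    ext <;> simp
  have hsum : sqL a u w = (a (w, w) : ℂ) * u w +
      ((a (w, w + (1, 0)) : ℂ) * u (w + (1, 0)) +
       ((a (w, w + (-1, 0)) : ℂ) * u (w + (-1, 0)) +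
        ((a (w, w + (0, 1)) : ℂ) * u (w + (0, 1)) +
         (a (w, w + (0, -1)) : ℂ) * u (w + (0, -1))))) := by
    rw [sqL]
    congr 1
    rw [show sqDirs = insert (1,0) (insert (-1,0) (insert (0,1) ({(0,-1)} : Finset (ℤ × ℤ)))) from rfl]
    rw [Finset.sum_insert (by decide), Finset.sum_insert (by decide),
      Finset.sum_insert (by decide), Finset.sum_singleton]
  have hE := heq w
  rw [hsum, huw, h1, h2, h3, hwv] at hE
  simp only [mul_zero, zero_add, add_zero] at hE
  have hadj : sqAdj w v := by
    have hvw : v - w = ((-1 : ℤ), (0 : ℤ)) := by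
      have : v - w = (v.1 - (v.1 + 1), v.2 - v.2) := rfl
      rw [this]
      ext <;> simp
    rw [sqAdj, hvw]
    decide
  have hane : (a (w, v) : ℂ) ≠ 0 := Complex.ofReal_ne_zero.mpr (hell₁ w v hadj)
  rcases mul_eq_zero.mp hE with h | h
  · exact hane h
  · exact hv h
end

section
/- Let a be an elliptic matrix for the hexagonal (honeycomb) lattice graph, and let L be the associated elliptic operator on functions u from the vertex set ℤ² × {0,1} to ℂ. Then for every λ ∈ ℂ there is no nonzero finitely supported function u with Lu = λu. (This is the case of the regular (6,3) tessellation, whose combinatorial curvature vanishes at every corner, in the paper's main theorem.) -/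
/-- Vertices of the hexagonal (honeycomb) lattice: `ℤ² × {0,1}`, where the Boolean
records the sublattice (`false` for `0`, `true` for `1`). -/
abbrev HexVertex : Type := (ℤ × ℤ) × Bool

/-- The displacement set for honeycomb adjacency. -/
def hexDirs : Finset (ℤ × ℤ) := {(0, 0), (1, 0), (0, 1)}

/-- The three neighbours of a vertex in the honeycomb lattice: `(p, 0)` is adjacent to
`(q, 1)` iff `q - p ∈ {(0,0), (1,0), (0,1)}`, and no two vertices with the same second
coordinate are adjacent. -/
def hexNbrs (v : HexVertex) : Finset HexVertex :=
  hexDirs.image (fun d => if v.2 then (v.1 - d, false) else (v.1 + d, true))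

/-- Adjacency in the honeycomb lattice graph. -/
def hexAdj (v w : HexVertex) : Prop := w ∈ hexNbrs v

/-- The elliptic operator on the honeycomb lattice associated to the matrix `a`:
`(L u)(v) = a(v,v) u(v) + ∑_{w ~ v} a(v,w) u(w)`. -/
noncomputable def hexL (a : HexVertex × HexVertex → ℝ) (u : HexVertex → ℂ)
    (v : HexVertex) : ℂ :=
  (a (v, v) : ℂ) * u v + ∑ w ∈ hexNbrs v, (a (v, w) : ℂ) * u w

lemma hexNbrs_false (p : ℤ × ℤ) :
    hexNbrs (p, false) = {(p, true), (p + (1,0), true), (p + (0,1), true)} := by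
  simp [hexNbrs, hexDirs, Finset.image_insert, Prod.mk_zero_zero]

lemma hexNbrs_true (p : ℤ × ℤ) :
    hexNbrs (p, true) = {(p, false), (p - (1,0), false), (p - (0,1), false)} := by
  simp [hexNbrs, hexDirs, Finset.image_insert, Prod.mk_zero_zero]

lemma sum_hexNbrs_false (p : ℤ × ℤ) (g : HexVertex → ℂ) :
    ∑ w ∈ hexNbrs (p, false), g w
      = g (p, true) + g (p + (1,0), true) + g (p + (0,1), true) := by
  rw [hexNbrs_false,
      Finset.sum_insert (by simp [Prod.ext_iff]),
      Finset.sum_insert (by simp [Prod.ext_iff]), Finset.sum_singleton]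
  ring

lemma sum_hexNbrs_true (p : ℤ × ℤ) (g : HexVertex → ℂ) :
    ∑ w ∈ hexNbrs (p, true), g w
      = g (p, false) + g (p - (1,0), false) + g (p - (0,1), false) := by
  rw [hexNbrs_true,
      Finset.sum_insert (by simp [Prod.ext_iff]; omega),
      Finset.sum_insert (by simp [Prod.ext_iff]), Finset.sum_singleton]
  ring

/-- No elliptic operator on the hexagonal lattice (the regular (6,3) tessellation) admits
a nonzero finitely supported eigenfunction. -/
theorem hexagonal_lattice_no_compactly_supported_eigenfunction
    (a : HexVertex × HexVertex → ℝ)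
    (hell₁ : ∀ v w, hexAdj v w → a (v, w) ≠ 0)
    (hell₂ : ∀ v w, v ≠ w → ¬ hexAdj v w → a (v, w) = 0)
    (lam : ℂ) :
    ¬ ∃ u : HexVertex → ℂ, u ≠ 0 ∧ (Function.support u).Finite ∧
      ∀ v, hexL a u v = lam * u v := by
  rintro ⟨u, hu, hfin, heig⟩
  -- the height function
  set f : HexVertex → ℤ := fun v => 2 * (v.1.1 + v.1.2) - (if v.2 then 1 else 0) with hf
  have hS : hfin.toFinset.Nonempty := by
    rcases Function.ne_iff.mp hu with ⟨v, hv⟩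
    exact ⟨v, by simpa [Function.mem_support] using hv⟩
  -- pick a vertex of maximal height
  obtain ⟨v₀, hv₀S, hv₀max⟩ := hfin.toFinset.exists_max_image f hS
  -- among those, pick one with maximal first coordinate
  have hT : (hfin.toFinset.filter (fun w => f w = f v₀)).Nonempty :=
    ⟨v₀, by simp [hv₀S]⟩
  obtain ⟨v, hvT, hvmax⟩ :=
    (hfin.toFinset.filter (fun w => f w = f v₀)).exists_max_image (fun w => w.1.1) hT
  rw [Finset.mem_filter] at hvT
  obtain ⟨hvS, hvf⟩ := hvT
  have hvne : u v ≠ 0 := by simpa [Function.mem_support] using hvS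
  -- any vertex strictly higher than v has u = 0
  have hzero : ∀ w : HexVertex, f v < f w → u w = 0 := by
    intro w hw
    by_contra h
    have : w ∈ hfin.toFinset := by simpa [Function.mem_support] using h
    have := hv₀max w this
    omega
  -- any vertex at the same height with strictly larger first coordinate has u = 0
  have hzero2 : ∀ w : HexVertex, f w = f v → v.1.1 < w.1.1 → u w = 0 := by
    intro w hw hx
    by_contra h
    have hwS : w ∈ hfin.toFinset := by simpa [Function.mem_support] using h
    have := hvmax w (Finset.mem_filter.mpr ⟨hwS, by rw [hw, hvf]⟩)
    omega
  obtain ⟨p, b⟩ := v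
  obtain ⟨x, y⟩ := p
  cases b with
  | true =>
    -- v = ((x,y), true); consider w = ((x,y), false), strictly higher, so u w = 0
    have hw0 : u ((x, y), false) = 0 := hzero _ (by simp [hf])
    have h1 : u (((x, y) : ℤ × ℤ) + (1, 0), true) = 0 := hzero _ (by simp [hf])
    have h2 : u (((x, y) : ℤ × ℤ) + (0, 1), true) = 0 := hzero _ (by simp [hf])
    have heq := heig ((x, y), false)
    rw [hexL, sum_hexNbrs_false] at heq
    rw [hw0, h1, h2] at heq
    simp at heq
    have hadj : hexAdj ((x, y), false) ((x, y), true) := by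
      simp [hexAdj, hexNbrs_false]
    have := hell₁ _ _ hadj
    rcases heq with h | h
    · exact this (by exact_mod_cast h)
    · exact hvne h
  | false =>
    -- v = ((x,y), false); consider w = ((x+1,y), true)
    have hpe : ((x + 1, y) : ℤ × ℤ) - (1, 0) = (x, y) := by simp [Prod.ext_iff]
    have hpe2 : ((x + 1, y) : ℤ × ℤ) - (0, 1) = (x + 1, y - 1) := by simp [Prod.ext_iff]
    have hw0 : u ((x + 1, y), true) = 0 := hzero _ (by simp [hf]; omega)
    have h1 : u (((x + 1, y) : ℤ × ℤ), false) = 0 := hzero _ (by simp [hf])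
    have h2 : u (((x + 1, y) : ℤ × ℤ) - (0, 1), false) = 0 := by
      rw [hpe2]
      exact hzero2 _ (by simp [hf]) (by simp)
    have heq := heig (((x + 1, y) : ℤ × ℤ), true)
    rw [hexL, sum_hexNbrs_true] at heq
    rw [hw0, h1, h2, hpe] at heq
    simp at heq
    have hadj : hexAdj (((x + 1, y) : ℤ × ℤ), true) ((x, y), false) := by
      rw [hexAdj, hexNbrs_true, hpe]
      simp
    have := hell₁ _ _ hadj
    rcases heq with h | h
    · exact this (by exact_mod_cast h)
    · exact hvne h
end

section
/- For every potential V : ℤ² → ℝ and every λ ∈ ℂ, the discrete Schrödinger operator H on the square lattice, defined by (Hu)(v) = ∑_{w ~ v} u(w) + V(v)u(v) where the sum runs over the four nearest neighbours of v, admits no nonzero finitely supported eigenfunction: there is no nonzero finitely supported u : ℤ² → ℂ with Hu = λu. (Special case of the paper's main theorem; this is Delyon–Souillard's result on the two-dimensional lattice.) -/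
/-- The discrete Schrödinger operator on the square lattice with potential `V`:
`(H u)(v) = ∑_{w ~ v} u(w) + V(v) u(v)`. -/
noncomputable def schrodinger (V : ℤ × ℤ → ℝ) (u : ℤ × ℤ → ℂ) (v : ℤ × ℤ) : ℂ :=
  (∑ d ∈ sqDirs, u (v + d)) + (V v : ℂ) * u v

lemma sqDirs_sum (f : ℤ × ℤ → ℂ) :
    ∑ d ∈ sqDirs, f d = f (1, 0) + f (-1, 0) + f (0, 1) + f (0, -1) := by
  simp only [sqDirs]
  rw [show ({(1, 0), (-1, 0), (0, 1), (0, -1)} : Finset (ℤ × ℤ)) =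
      insert (1,0) (insert (-1,0) (insert (0,1) {(0,-1)})) from rfl]
  rw [Finset.sum_insert (by decide), Finset.sum_insert (by decide),
    Finset.sum_insert (by decide), Finset.sum_singleton]
  ring

/-- Delyon–Souillard in two dimensions: the discrete Schrödinger operator on the square
lattice admits no nonzero finitely supported eigenfunction. -/
theorem schrodinger_square_lattice_no_compactly_supported_eigenfunction
    (V : ℤ × ℤ → ℝ) (lam : ℂ) :
    ¬ ∃ u : ℤ × ℤ → ℂ, u ≠ 0 ∧ (Function.support u).Finite ∧
      ∀ v, schrodinger V u v = lam * u v := by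
  rintro ⟨u, hu, hfin, heq⟩
  -- choose v in the support maximizing (x+y, x) lexicographically
  set S : Finset (ℤ × ℤ) := hfin.toFinset with hS
  have hSne : S.Nonempty := by
    rcases Function.ne_iff.mp hu with ⟨v, hv⟩
    exact ⟨v, by simpa [hS, Function.mem_support] using hv⟩
  obtain ⟨v, hvS, hmax⟩ := S.exists_max_image
    (fun v => toLex ((v.1 + v.2 : ℤ), v.1)) hSne
  have hvsupp : u v ≠ 0 := by simpa [hS, Function.mem_support] using hvS
  -- any point strictly larger in lex order is outside the support
  have hz : ∀ w : ℤ × ℤ,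
      toLex ((v.1 + v.2 : ℤ), v.1) < toLex ((w.1 + w.2 : ℤ), w.1) → u w = 0 := by
    intro w hw
    by_contra h
    have hwS : w ∈ S := by simpa [hS, Function.mem_support] using h
    exact absurd (hmax w hwS) (not_le.mpr hw)
  -- the eigen-equation at v + (1,0)
  have h1 := heq (v + (1, 0))
  rw [schrodinger, sqDirs_sum] at h1
  have e0 : u (v + (1, 0)) = 0 := by
    apply hz; rw [Prod.Lex.lt_iff]; left; simp
  have e1 : u (v + (1, 0) + (1, 0)) = 0 := by
    apply hz; rw [Prod.Lex.lt_iff]; left; simp [Prod.ext_iff]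
  have e2 : u (v + (1, 0) + (-1, 0)) = u v := by
    congr 1; ext <;> simp
  have e3 : u (v + (1, 0) + (0, 1)) = 0 := by
    apply hz; rw [Prod.Lex.lt_iff]; left; simp [Prod.ext_iff]; omega
  have e4 : u (v + (1, 0) + (0, -1)) = 0 := by
    apply hz; rw [Prod.Lex.lt_iff]; right
    constructor
    · simp [Prod.ext_iff]; omega
    · simp [Prod.ext_iff]
  rw [e0, e1, e2, e3, e4] at h1
  simp at h1
  exact hvsupp h1
end

section
/- Let G be a locally finite graph with vertex set V, let a : V × V → ℝ be an elliptic matrix, L the associated elliptic operator, λ ∈ ℂ, and u : V → ℂ a function with Lu = λu. Suppose v is a vertex with u(v) = 0 and w is a neighbour of v such that u vanishes at every neighbour of v other than w. Then u(w) = 0. (This propagation step, resting on ellipticity, is the algebraic core of the paper's Lemmas 4.1 and 4.3.) -/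
/-- Propagation step for elliptic operators on locally finite graphs: if `Lu = λu`,
`u(v) = 0`, `w` is a neighbour of `v`, and `u` vanishes at every neighbour of `v`
other than `w`, then `u(w) = 0`. -/
theorem elliptic_propagation {V : Type*} (G : SimpleGraph V) [G.LocallyFinite]
    (a : V × V → ℝ)
    (hell₁ : ∀ v w, G.Adj v w → a (v, w) ≠ 0)
    (hell₂ : ∀ v w, v ≠ w → ¬ G.Adj v w → a (v, w) = 0)
    (u : V → ℂ) (lam : ℂ)
    (heigen : ∀ v, (a (v, v) : ℂ) * u v + ∑ w ∈ G.neighborFinset v, (a (v, w) : ℂ) * u w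
      = lam * u v)
    (v w : V) (hv : u v = 0) (hvw : G.Adj v w)
    (hother : ∀ x, G.Adj v x → x ≠ w → u x = 0) :
    u w = 0 := by
  have h := heigen v
  rw [hv, mul_zero, mul_zero, zero_add] at h
  rw [Finset.sum_eq_single w] at h
  · have haw : (a (v, w) : ℂ) ≠ 0 := by
      exact_mod_cast hell₁ v w hvw
    exact (mul_eq_zero.mp h).resolve_left haw
  · intro b hb hbw
    rw [hother b (G.mem_neighborFinset v b |>.mp hb) hbw, mul_zero]
  · intro hnw
    exact absurd ((G.mem_neighborFinset v w).mpr hvw) hnw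
end
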